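/- The entropy-regularized causal optimal transport problem admits the minimax reformulation: inf over causal couplings π of {E^π[c] - εH(π)} equals sup over l in L(μ) of inf over all couplings π of {E^π[c+l] - εH(π)}. -/

import Mathlib

open scoped BigOperators
open scoped Pointwise

/-- Shannon entropy of a probability vector on a finite set. -/
noncomputable def shannonEntropy {α : Type*} [Fintype α] (p : α → ℝ) : ℝ :=
  -∑ a, p a * Real.log (p a)

/-- A coupling of `μ` and `ν`. -/
def IsCouplingOf {A B : Type*} [Fintype A] [Fintype B]
    (μ : A → ℝ) (ν : B → ℝ) (π : A × B → ℝ) : Prop :=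
  (∀ p, 0 ≤ π p) ∧ (∀ a, ∑ b, π (a, b) = μ a) ∧ (∀ b, ∑ a, π (a, b) = ν b)

/-- Expected cost `E^π[c]`. -/
noncomputable def expCost {A : Type*} [Fintype A] (π : A → ℝ) (c : A → ℝ) : ℝ :=
  ∑ a, π a * c a

/-- `f` depends only on the coordinates of the path up to (and including) time `t`. -/
def DepOn {Z : Type*} {T : ℕ} (t : ℕ) (f : (Fin T → Z) → ℝ) : Prop :=
  ∀ z z' : Fin T → Z, (∀ s : Fin T, (s : ℕ) ≤ t → z s = z' s) → f z = f z'

/-- Causality of a coupling on path spaces: for each `t` with `t + 1 < T`,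
conditionally on `x_{≤t}`, the past `y_{≤t}` is independent of the whole path `x`. -/
def CausalCoupling {X Y : Type*} {T : ℕ} [Fintype X] [Fintype Y] [DecidableEq X]
    (π : ((Fin T → X) × (Fin T → Y)) → ℝ) : Prop :=
  ∀ t : ℕ, t + 1 < T →
    ∀ f : (Fin T → Y) → ℝ, DepOn t f →
    ∀ g : (Fin T → X) → ℝ, ∀ a : Fin T → X,
      (∑ p : (Fin T → X) × (Fin T → Y),
          if ∀ s : Fin T, (s : ℕ) ≤ t → p.1 s = a s then π p * f p.2 * g p.1 else 0) *
        (∑ p : (Fin T → X) × (Fin T → Y),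
          if ∀ s : Fin T, (s : ℕ) ≤ t → p.1 s = a s then π p else 0)
      = (∑ p : (Fin T → X) × (Fin T → Y),
          if ∀ s : Fin T, (s : ℕ) ≤ t → p.1 s = a s then π p * f p.2 else 0) *
        (∑ p : (Fin T → X) × (Fin T → Y),
          if ∀ s : Fin T, (s : ℕ) ≤ t → p.1 s = a s then π p * g p.1 else 0)

/-- `M` is an adapted `μ`-martingale w.r.t. the canonical filtration:
`M t` depends only on coordinates up to time `t`, and
`E^μ[(M_{t+1} - M_t) φ] = 0` for every `φ` depending only on `x_{≤t}`. -/
def IsMuMartingale {X : Type*} {T : ℕ} [Fintype X]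
    (μ : (Fin T → X) → ℝ) (M : ℕ → (Fin T → X) → ℝ) : Prop :=
  (∀ t : ℕ, DepOn t (M t)) ∧
  ∀ t : ℕ, t + 1 < T → ∀ φ : (Fin T → X) → ℝ, DepOn t φ →
    ∑ x, μ x * φ x * (M (t + 1) x - M t x) = 0

/-- Membership in the set `L(μ)` of causality test functions. -/
def InLmu {X Y : Type*} {T : ℕ} [Fintype X] [Fintype Y]
    (μ : (Fin T → X) → ℝ) (l : ((Fin T → X) × (Fin T → Y)) → ℝ) : Prop :=
  ∃ (J : ℕ) (h : Fin J → ℕ → (Fin T → Y) → ℝ) (M : Fin J → ℕ → (Fin T → X) → ℝ),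
    (∀ j t, DepOn t (h j t)) ∧ (∀ j, IsMuMartingale μ (M j)) ∧
    l = fun p => ∑ j, ∑ t ∈ Finset.range (T - 1), h j t p.2 * (M j (t + 1) p.1 - M j t p.1)

set_option linter.unusedSectionVars false

section Helpers

variable {X Y : Type*} {T : ℕ} [Fintype X] [Fintype Y] [DecidableEq X]

lemma depOn_mono {Z : Type*} {t t' : ℕ} {f : (Fin T → Z) → ℝ} (h : DepOn t f)
    (htt : t ≤ t') : DepOn t' f :=
  fun z z' hz => h z z' fun s hs => hz s (hs.trans htt)

lemma marginal_fst {μ : (Fin T → X) → ℝ} {ν : (Fin T → Y) → ℝ}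
    {π : ((Fin T → X) × (Fin T → Y)) → ℝ} (hπ : IsCouplingOf μ ν π)
    (F : (Fin T → X) → ℝ) :
    ∑ p : (Fin T → X) × (Fin T → Y), π p * F p.1 = ∑ x, μ x * F x := by
  rw [Fintype.sum_prod_type]
  refine Finset.sum_congr rfl fun x _ => ?_
  have h0 : ∑ y, π (x, y) * F (x, y).1 = ∑ y, π (x, y) * F x := rfl
  rw [h0, ← Finset.sum_mul, hπ.2.1 x]

/-- key lemma A: for a causal coupling, pairing with a single causality test term vanishes. -/
lemma pairing_term_zero_of_causal {μ : (Fin T → X) → ℝ} {ν : (Fin T → Y) → ℝ}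
    {π : ((Fin T → X) × (Fin T → Y)) → ℝ} (hπ : IsCouplingOf μ ν π)
    (hc : CausalCoupling π) (t : ℕ) (ht : t + 1 < T)
    (f : (Fin T → Y) → ℝ) (hf : DepOn t f) (M : ℕ → (Fin T → X) → ℝ)
    (hM : IsMuMartingale μ M) :
    ∑ p : (Fin T → X) × (Fin T → Y), π p * (f p.2 * (M (t + 1) p.1 - M t p.1)) = 0 := by
  rcases isEmpty_or_nonempty X with hX | hX
  · have hemp : IsEmpty ((Fin T → X) × (Fin T → Y)) := by
      have h1 : IsEmpty (Fin T → X) := ⟨fun g => hX.false (g ⟨0, by omega⟩)⟩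
      infer_instance
    rw [Finset.univ_eq_empty, Finset.sum_empty]
  · set G : ((Fin T → X) × (Fin T → Y)) → ℝ :=
      fun p => π p * (f p.2 * (M (t + 1) p.1 - M t p.1)) with hG
    set key : ((Fin T → X) × (Fin T → Y)) → ({s : Fin T // (s : ℕ) ≤ t} → X) :=
      fun p s => p.1 s.1 with hkey
    have hsplit : ∑ p, G p = ∑ b : {s : Fin T // (s : ℕ) ≤ t} → X,
        ∑ p : (Fin T → X) × (Fin T → Y), if b = key p then G p else 0 := by
      rw [Finset.sum_comm]
      refine Finset.sum_congr rfl fun p _ => ?_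
      rw [Finset.sum_ite_eq']
      simp
    rw [hsplit]
    refine Finset.sum_eq_zero fun b _ => ?_
    -- extension of the prefix b to a full path
    set a : Fin T → X := fun s => if h : (s : ℕ) ≤ t then b ⟨s, h⟩ else Classical.arbitrary X
      with ha
    have hcond : ∀ p : (Fin T → X) × (Fin T → Y),
        (b = key p) ↔ (∀ s : Fin T, (s : ℕ) ≤ t → p.1 s = a s) := by
      intro p
      constructor
      · intro hb s hs
        rw [ha]
        simp only [hs, dif_pos]
        rw [hb]
      · intro hall
        funext s
        show b s = p.1 s.1
        rw [hall s.1 s.2, ha]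
        simp [s.2]
    have hrw : ∀ (H : ((Fin T → X) × (Fin T → Y)) → ℝ),
        (∑ p : (Fin T → X) × (Fin T → Y), if b = key p then H p else 0)
          = ∑ p : (Fin T → X) × (Fin T → Y),
              if ∀ s : Fin T, (s : ℕ) ≤ t → p.1 s = a s then H p else 0 := by
      intro H
      exact Finset.sum_congr rfl fun p _ => if_congr (hcond p) rfl rfl
    rw [hrw]
    -- apply causality
    have hca := hc t ht f hf (fun x => M (t + 1) x - M t x) a
    -- the conditional expectation of the martingale increment vanishes
    have hδ : (∑ p : (Fin T → X) × (Fin T → Y),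
        if ∀ s : Fin T, (s : ℕ) ≤ t → p.1 s = a s
          then π p * (M (t + 1) p.1 - M t p.1) else 0) = 0 := by
      have h1 : (∑ p : (Fin T → X) × (Fin T → Y),
          if ∀ s : Fin T, (s : ℕ) ≤ t → p.1 s = a s
            then π p * (M (t + 1) p.1 - M t p.1) else 0)
          = ∑ p : (Fin T → X) × (Fin T → Y), π p *
              ((if ∀ s : Fin T, (s : ℕ) ≤ t → p.1 s = a s then (1:ℝ) else 0) *
                (M (t + 1) p.1 - M t p.1)) := by
        refine Finset.sum_congr rfl fun p _ => ?_
        split <;> ring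
      rw [h1, marginal_fst hπ (fun x => (if ∀ s : Fin T, (s : ℕ) ≤ t → x s = a s
        then (1:ℝ) else 0) * (M (t + 1) x - M t x))]
      have h2 : ∀ x : Fin T → X, μ x * ((if ∀ s : Fin T, (s : ℕ) ≤ t → x s = a s
            then (1:ℝ) else 0) * (M (t + 1) x - M t x))
          = μ x * (if ∀ s : Fin T, (s : ℕ) ≤ t → x s = a s then (1:ℝ) else 0) *
              (M (t + 1) x - M t x) := fun x => by ring
      rw [Finset.sum_congr rfl fun x _ => h2 x]
      refine hM.2 t ht _ ?_
      intro z z' hz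
      have : (∀ s : Fin T, (s : ℕ) ≤ t → z s = a s) ↔
          (∀ s : Fin T, (s : ℕ) ≤ t → z' s = a s) := by
        constructor
        · intro hh s hs; rw [← hz s hs]; exact hh s hs
        · intro hh s hs; rw [hz s hs]; exact hh s hs
      simp only [this]
    have hδ' : (∑ p : (Fin T → X) × (Fin T → Y),
        if ∀ s : Fin T, (s : ℕ) ≤ t → p.1 s = a s
          then π p * (M (t + 1) p.1 - M t p.1) else 0)
        = (∑ p : (Fin T → X) × (Fin T → Y),
            if ∀ s : Fin T, (s : ℕ) ≤ t → p.1 s = a s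
              then π p * ((fun x => M (t + 1) x - M t x) p.1) else 0) := rfl
    rw [hδ', hδ, mul_zero] at hca
    -- now: S_fg * S_1 = 0
    have hS1nonneg : (0:ℝ) ≤ ∑ p : (Fin T → X) × (Fin T → Y),
        if ∀ s : Fin T, (s : ℕ) ≤ t → p.1 s = a s then π p else 0 :=
      Finset.sum_nonneg fun p _ => by
        by_cases hcp : ∀ s : Fin T, (s : ℕ) ≤ t → p.1 s = a s
        · rw [if_pos hcp]; exact hπ.1 p
        · rw [if_neg hcp]
    have hGrw : (∑ p : (Fin T → X) × (Fin T → Y),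
        if ∀ s : Fin T, (s : ℕ) ≤ t → p.1 s = a s then G p else 0)
        = ∑ p : (Fin T → X) × (Fin T → Y),
            if ∀ s : Fin T, (s : ℕ) ≤ t → p.1 s = a s
              then π p * f p.2 * (M (t + 1) p.1 - M t p.1) else 0 := by
      refine Finset.sum_congr rfl fun p _ => ?_
      rw [hG]
      split
      · ring
      · rfl
    rw [hGrw]
    rcases eq_or_lt_of_le hS1nonneg with h0 | hpos
    · have hz := (Finset.sum_eq_zero_iff_of_nonneg (fun p _ => by
        split
        · exact hπ.1 p
        · exact le_rfl)).mp h0.symm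
      refine Finset.sum_eq_zero fun p _ => ?_
      by_cases hcp : ∀ s : Fin T, (s : ℕ) ≤ t → p.1 s = a s
      · have := hz p (Finset.mem_univ p)
        rw [if_pos hcp] at this
        rw [if_pos hcp, this, zero_mul, zero_mul]
      · rw [if_neg hcp]
    · rcases mul_eq_zero.mp hca with h | h
      · exact h
      · exact absurd h (ne_of_gt hpos)

lemma pairing_zero_of_causal {μ : (Fin T → X) → ℝ} {ν : (Fin T → Y) → ℝ}
    {π : ((Fin T → X) × (Fin T → Y)) → ℝ} (hπ : IsCouplingOf μ ν π)
    (hc : CausalCoupling π) {l : ((Fin T → X) × (Fin T → Y)) → ℝ} (hl : InLmu μ l) :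
    ∑ p : (Fin T → X) × (Fin T → Y), π p * l p = 0 := by
  obtain ⟨J, h, M, hd, hm, hleq⟩ := hl
  rw [hleq]
  have hswap : ∑ p : (Fin T → X) × (Fin T → Y),
      π p * (∑ j, ∑ t ∈ Finset.range (T - 1), h j t p.2 * (M j (t + 1) p.1 - M j t p.1))
      = ∑ j, ∑ t ∈ Finset.range (T - 1), ∑ p : (Fin T → X) × (Fin T → Y),
          π p * (h j t p.2 * (M j (t + 1) p.1 - M j t p.1)) := by
    simp only [Finset.mul_sum]
    rw [Finset.sum_comm]
    exact Finset.sum_congr rfl fun j _ => Finset.sum_comm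
  rw [hswap]
  refine Finset.sum_eq_zero fun j _ => Finset.sum_eq_zero fun t htmem => ?_
  have ht : t + 1 < T := by
    have := Finset.mem_range.mp htmem
    omega
  exact pairing_term_zero_of_causal hπ hc t ht (h j t) (hd j t) (M j) (hm j)

/-- Conditional expectation of `ψ` given the path up to time `s`, under `μ`. -/
noncomputable def muCondExp (μ : (Fin T → X) → ℝ) (ψ : (Fin T → X) → ℝ) (s : ℕ)
    (x : Fin T → X) : ℝ :=
  (∑ x' : Fin T → X, if ∀ s' : Fin T, (s' : ℕ) ≤ s → x' s' = x s' then μ x' * ψ x' else 0) /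
  (∑ x' : Fin T → X, if ∀ s' : Fin T, (s' : ℕ) ≤ s → x' s' = x s' then μ x' else 0)

lemma condM_depOn (μ ψ : (Fin T → X) → ℝ) (s : ℕ) : DepOn s (muCondExp μ ψ s) := by
  intro z z' hz
  unfold muCondExp
  have hiff : ∀ x' : Fin T → X,
      (∀ s' : Fin T, (s' : ℕ) ≤ s → x' s' = z s') ↔
      (∀ s' : Fin T, (s' : ℕ) ≤ s → x' s' = z' s') := by
    intro x'
    constructor
    · intro hh s' hs'; rw [← hz s' hs']; exact hh s' hs'
    · intro hh s' hs'; rw [hz s' hs']; exact hh s' hs'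
  congr 1
  · exact Finset.sum_congr rfl fun x' _ => if_congr (hiff x') rfl rfl
  · exact Finset.sum_congr rfl fun x' _ => if_congr (hiff x') rfl rfl

lemma condM_avg [Nonempty X] {μ : (Fin T → X) → ℝ} (hμpos : ∀ x, 0 ≤ μ x)
    (ψ : (Fin T → X) → ℝ) (s : ℕ) (φ : (Fin T → X) → ℝ) (hφ : DepOn s φ) :
    ∑ x, μ x * φ x * muCondExp μ ψ s x = ∑ x, μ x * φ x * ψ x := by
  set key : (Fin T → X) → ({s' : Fin T // (s' : ℕ) ≤ s} → X) := fun x s' => x s'.1 with hkey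
  have hsplit : ∀ (H : (Fin T → X) → ℝ), ∑ x, H x
      = ∑ b : {s' : Fin T // (s' : ℕ) ≤ s} → X, ∑ x, if b = key x then H x else 0 := by
    intro H
    rw [Finset.sum_comm]
    refine Finset.sum_congr rfl fun x _ => ?_
    rw [Finset.sum_ite_eq']
    simp
  rw [hsplit (fun x => μ x * φ x * muCondExp μ ψ s x), hsplit (fun x => μ x * φ x * ψ x)]
  refine Finset.sum_congr rfl fun b _ => ?_
  set a : Fin T → X := fun s' => if h : (s' : ℕ) ≤ s then b ⟨s', h⟩ else Classical.arbitrary X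
    with ha
  have hcond : ∀ x : Fin T → X, (b = key x) ↔ (∀ s' : Fin T, (s' : ℕ) ≤ s → x s' = a s') := by
    intro x
    constructor
    · intro hb s' hs'
      rw [ha]
      simp only [hs', dif_pos]
      rw [hb]
    · intro hall
      funext s'
      show b s' = x s'.1
      rw [hall s'.1 s'.2, ha]
      simp [s'.2]
  have hrw : ∀ (H : (Fin T → X) → ℝ),
      (∑ x, if b = key x then H x else 0)
        = ∑ x, if ∀ s' : Fin T, (s' : ℕ) ≤ s → x s' = a s' then H x else 0 :=
    fun H => Finset.sum_congr rfl fun x _ => if_congr (hcond x) rfl rfl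
  rw [hrw, hrw]
  set Nb : ℝ := ∑ x', if ∀ s' : Fin T, (s' : ℕ) ≤ s → x' s' = a s' then μ x' * ψ x' else 0
    with hNb
  set Db : ℝ := ∑ x', if ∀ s' : Fin T, (s' : ℕ) ≤ s → x' s' = a s' then μ x' else 0 with hDb
  have hcondM : ∀ x : Fin T → X, (∀ s' : Fin T, (s' : ℕ) ≤ s → x s' = a s') →
      muCondExp μ ψ s x = Nb / Db := by
    intro x hx
    have hiff : ∀ x' : Fin T → X,
        (∀ s' : Fin T, (s' : ℕ) ≤ s → x' s' = x s') ↔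
        (∀ s' : Fin T, (s' : ℕ) ≤ s → x' s' = a s') := by
      intro x'
      constructor
      · intro hh s' hs'; rw [hh s' hs', hx s' hs']
      · intro hh s' hs'; rw [hh s' hs', hx s' hs']
    unfold muCondExp
    rw [hNb, hDb]
    congr 1
    · exact Finset.sum_congr rfl fun x' _ => if_congr (hiff x') rfl rfl
    · exact Finset.sum_congr rfl fun x' _ => if_congr (hiff x') rfl rfl
  have hφconst : ∀ x : Fin T → X, (∀ s' : Fin T, (s' : ℕ) ≤ s → x s' = a s') → φ x = φ a :=
    fun x hx => hφ x a hx
  have hL : (∑ x, if ∀ s' : Fin T, (s' : ℕ) ≤ s → x s' = a s'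
        then μ x * φ x * muCondExp μ ψ s x else 0) = φ a * (Nb / Db) * Db := by
    have : ∀ x : Fin T → X, (if ∀ s' : Fin T, (s' : ℕ) ≤ s → x s' = a s'
          then μ x * φ x * muCondExp μ ψ s x else 0)
        = (φ a * (Nb / Db)) * (if ∀ s' : Fin T, (s' : ℕ) ≤ s → x s' = a s'
          then μ x else 0) := by
      intro x
      by_cases hx : ∀ s' : Fin T, (s' : ℕ) ≤ s → x s' = a s'
      · rw [if_pos hx, if_pos hx, hcondM x hx, hφconst x hx]; ring
      · rw [if_neg hx, if_neg hx, mul_zero]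
    rw [Finset.sum_congr rfl fun x _ => this x, ← Finset.mul_sum]
  have hR : (∑ x, if ∀ s' : Fin T, (s' : ℕ) ≤ s → x s' = a s'
        then μ x * φ x * ψ x else 0) = φ a * Nb := by
    have : ∀ x : Fin T → X, (if ∀ s' : Fin T, (s' : ℕ) ≤ s → x s' = a s'
          then μ x * φ x * ψ x else 0)
        = φ a * (if ∀ s' : Fin T, (s' : ℕ) ≤ s → x s' = a s' then μ x * ψ x else 0) := by
      intro x
      by_cases hx : ∀ s' : Fin T, (s' : ℕ) ≤ s → x s' = a s'
      · rw [if_pos hx, if_pos hx, hφconst x hx]; ring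
      · rw [if_neg hx, if_neg hx, mul_zero]
    rw [Finset.sum_congr rfl fun x _ => this x, ← Finset.mul_sum, ← hNb]
  rw [hL, hR]
  by_cases hDb0 : Db = 0
  · have hμ0 : ∀ x ∈ Finset.univ, (if ∀ s' : Fin T, (s' : ℕ) ≤ s → x s' = a s'
        then μ x else 0) = 0 := by
      refine (Finset.sum_eq_zero_iff_of_nonneg fun x _ => ?_).mp hDb0
      by_cases hx : ∀ s' : Fin T, (s' : ℕ) ≤ s → x s' = a s'
      · rw [if_pos hx]; exact hμpos x
      · rw [if_neg hx]
    have hNb0 : Nb = 0 := by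
      rw [hNb]
      refine Finset.sum_eq_zero fun x _ => ?_
      by_cases hx : ∀ s' : Fin T, (s' : ℕ) ≤ s → x s' = a s'
      · have := hμ0 x (Finset.mem_univ x)
        rw [if_pos hx] at this
        rw [if_pos hx, this, zero_mul]
      · rw [if_neg hx]
    rw [hDb0, hNb0]
    ring
  · field_simp

lemma condM_mart [Nonempty X] {μ : (Fin T → X) → ℝ} (hμpos : ∀ x, 0 ≤ μ x)
    (ψ : (Fin T → X) → ℝ) : IsMuMartingale μ (muCondExp μ ψ) := by
  refine ⟨fun s => condM_depOn μ ψ s, fun s hs φ hφ => ?_⟩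
  have hsplit : ∑ x, μ x * φ x * (muCondExp μ ψ (s + 1) x - muCondExp μ ψ s x)
      = (∑ x, μ x * φ x * muCondExp μ ψ (s + 1) x) - ∑ x, μ x * φ x * muCondExp μ ψ s x := by
    rw [← Finset.sum_sub_distrib]
    exact Finset.sum_congr rfl fun x _ => by ring
  rw [hsplit, condM_avg hμpos ψ (s + 1) φ (depOn_mono hφ (Nat.le_succ s)),
    condM_avg hμpos ψ s φ hφ, sub_self]

lemma causal_of_pairing_zero {μ : (Fin T → X) → ℝ} {ν : (Fin T → Y) → ℝ}
    {π : ((Fin T → X) × (Fin T → Y)) → ℝ} (hμpos : ∀ x, 0 ≤ μ x)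
    (hπ : IsCouplingOf μ ν π)
    (H0 : ∀ l, InLmu μ l → ∑ p : (Fin T → X) × (Fin T → Y), π p * l p = 0) :
    CausalCoupling π := by
  intro t ht f hf g a
  rcases isEmpty_or_nonempty ((Fin T → X) × (Fin T → Y)) with hem | hne
  · rw [Finset.univ_eq_empty]
    simp
  · have hX : Nonempty X := ⟨(Classical.arbitrary ((Fin T → X) × (Fin T → Y))).1 ⟨0, by omega⟩⟩
    set ψ : (Fin T → X) → ℝ :=
      fun x => (if ∀ s : Fin T, (s : ℕ) ≤ t → x s = a s then (1:ℝ) else 0) * g x with hψ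
    -- Step 1: one-step orthogonality from the constraints
    have step1 : ∀ s : ℕ, t ≤ s → s + 1 < T →
        ∑ p : (Fin T → X) × (Fin T → Y),
          π p * (f p.2 * (muCondExp μ ψ (s + 1) p.1 - muCondExp μ ψ s p.1)) = 0 := by
      intro s hts hsT
      refine H0 _ ⟨1, fun _ t' => if t' = s then f else 0, fun _ => muCondExp μ ψ, ?_, ?_, ?_⟩
      · intro j t'
        show DepOn t' (if t' = s then f else 0)
        by_cases h' : t' = s
        · rw [if_pos h']
          exact depOn_mono hf (h' ▸ hts)
        · rw [if_neg h']
          exact fun z z' _ => rfl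
      · intro j
        exact condM_mart hμpos ψ
      · funext p
        rw [Fin.sum_univ_one]
        have hterm : ∀ t' ∈ Finset.range (T - 1),
            (if t' = s then f else 0) p.2 * (muCondExp μ ψ (t' + 1) p.1 - muCondExp μ ψ t' p.1)
            = if t' = s then f p.2 * (muCondExp μ ψ (s + 1) p.1 - muCondExp μ ψ s p.1) else 0 := by
          intro t' _
          by_cases h' : t' = s
          · subst h'
            rw [if_pos rfl, if_pos rfl]
          · rw [if_neg h', if_neg h']
            simp
        rw [Finset.sum_congr rfl hterm, Finset.sum_ite_eq' (Finset.range (T - 1)) s,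
          if_pos (Finset.mem_range.mpr (by omega))]
    -- Step 2: telescoping
    have step2 : ∑ p : (Fin T → X) × (Fin T → Y), π p * (f p.2 * muCondExp μ ψ (T - 1) p.1)
        = ∑ p : (Fin T → X) × (Fin T → Y), π p * (f p.2 * muCondExp μ ψ t p.1) := by
      have gen : ∀ s : ℕ, t ≤ s → s ≤ T - 1 →
          ∑ p : (Fin T → X) × (Fin T → Y), π p * (f p.2 * muCondExp μ ψ s p.1)
          = ∑ p : (Fin T → X) × (Fin T → Y), π p * (f p.2 * muCondExp μ ψ t p.1) := by
        intro s hts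
        induction s, hts using Nat.le_induction with
        | base => intro _; rfl
        | succ s hts ih =>
          intro hsT
          have hs1 : s + 1 < T := by omega
          have hdiff := step1 s hts hs1
          have hexp : ∑ p : (Fin T → X) × (Fin T → Y),
              π p * (f p.2 * (muCondExp μ ψ (s + 1) p.1 - muCondExp μ ψ s p.1))
              = (∑ p : (Fin T → X) × (Fin T → Y), π p * (f p.2 * muCondExp μ ψ (s + 1) p.1))
                - ∑ p : (Fin T → X) × (Fin T → Y), π p * (f p.2 * muCondExp μ ψ s p.1) := by
            rw [← Finset.sum_sub_distrib]
            exact Finset.sum_congr rfl fun p _ => by ring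
          rw [hexp] at hdiff
          have := sub_eq_zero.mp hdiff
          rw [this]
          exact ih (by omega)
      exact gen (T - 1) (by omega) le_rfl
    -- Step 3: at the terminal time the conditional expectation is ψ itself (π-a.s.)
    have step3 : ∑ p : (Fin T → X) × (Fin T → Y), π p * (f p.2 * muCondExp μ ψ (T - 1) p.1)
        = ∑ p : (Fin T → X) × (Fin T → Y), π p * (f p.2 * ψ p.1) := by
      refine Finset.sum_congr rfl fun p _ => ?_
      by_cases hx : μ p.1 = 0
      · have hπ0 : π p = 0 := by
          have hsum : ∑ y, π (p.1, y) = 0 := by rw [hπ.2.1 p.1, hx]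
          have := (Finset.sum_eq_zero_iff_of_nonneg fun y _ => hπ.1 (p.1, y)).mp hsum p.2
            (Finset.mem_univ p.2)
          simpa using this
        rw [hπ0, zero_mul, zero_mul]
      · have hcondall : ∀ x' : Fin T → X,
            (∀ s' : Fin T, (s' : ℕ) ≤ T - 1 → x' s' = p.1 s') ↔ x' = p.1 := by
          intro x'
          constructor
          · intro hh
            funext s'
            exact hh s' (by omega)
          · intro hh s' _
            rw [hh]
        have : muCondExp μ ψ (T - 1) p.1 = ψ p.1 := by
          unfold muCondExp
          rw [Finset.sum_congr rfl fun x' _ => if_congr (hcondall x') rfl rfl,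
            Finset.sum_congr rfl fun x' _ => if_congr (hcondall x') rfl rfl,
            Finset.sum_ite_eq' Finset.univ p.1 (fun x' => μ x' * ψ x'),
            Finset.sum_ite_eq' Finset.univ p.1 μ, if_pos (Finset.mem_univ p.1),
            if_pos (Finset.mem_univ p.1), mul_comm, mul_div_assoc, div_self hx, mul_one]
        rw [this]
    -- Step 4: rewrite the ψ-pairing as the constrained sum
    have step4 : ∑ p : (Fin T → X) × (Fin T → Y), π p * (f p.2 * ψ p.1)
        = ∑ p : (Fin T → X) × (Fin T → Y),
            if ∀ s : Fin T, (s : ℕ) ≤ t → p.1 s = a s then π p * f p.2 * g p.1 else 0 := by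
      refine Finset.sum_congr rfl fun p _ => ?_
      rw [hψ]
      by_cases hcp : ∀ s : Fin T, (s : ℕ) ≤ t → p.1 s = a s
      · rw [if_pos hcp]
        simp only [if_pos hcp]
        ring
      · rw [if_neg hcp]
        simp only [if_neg hcp]
        ring
    -- Step 5: compute the pairing with muCondExp at time t
    have hmarg : ∀ (G : (Fin T → X) → ℝ),
        (∑ p : (Fin T → X) × (Fin T → Y),
          if ∀ s : Fin T, (s : ℕ) ≤ t → p.1 s = a s then π p * G p.1 else 0)
        = ∑ x, if ∀ s : Fin T, (s : ℕ) ≤ t → x s = a s then μ x * G x else 0 := by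
      intro G
      have h1 : (∑ p : (Fin T → X) × (Fin T → Y),
          if ∀ s : Fin T, (s : ℕ) ≤ t → p.1 s = a s then π p * G p.1 else 0)
          = ∑ p : (Fin T → X) × (Fin T → Y), π p *
              ((if ∀ s : Fin T, (s : ℕ) ≤ t → p.1 s = a s then (1:ℝ) else 0) * G p.1) := by
        refine Finset.sum_congr rfl fun p _ => ?_
        split <;> ring
      rw [h1, marginal_fst hπ (fun x => (if ∀ s : Fin T, (s : ℕ) ≤ t → x s = a s
        then (1:ℝ) else 0) * G x)]
      refine Finset.sum_congr rfl fun x _ => ?_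
      split <;> ring
    set S1 : ℝ := ∑ p : (Fin T → X) × (Fin T → Y),
      if ∀ s : Fin T, (s : ℕ) ≤ t → p.1 s = a s then π p else 0 with hS1
    set Sg : ℝ := ∑ p : (Fin T → X) × (Fin T → Y),
      if ∀ s : Fin T, (s : ℕ) ≤ t → p.1 s = a s then π p * g p.1 else 0 with hSg
    set Sf : ℝ := ∑ p : (Fin T → X) × (Fin T → Y),
      if ∀ s : Fin T, (s : ℕ) ≤ t → p.1 s = a s then π p * f p.2 else 0 with hSf
    have hcM : ∀ x : Fin T → X, muCondExp μ ψ t x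
        = if ∀ s : Fin T, (s : ℕ) ≤ t → x s = a s then Sg / S1 else 0 := by
      intro x
      by_cases hcx : ∀ s : Fin T, (s : ℕ) ≤ t → x s = a s
      · rw [if_pos hcx]
        have hiff : ∀ x' : Fin T → X,
            (∀ s' : Fin T, (s' : ℕ) ≤ t → x' s' = x s') ↔
            (∀ s' : Fin T, (s' : ℕ) ≤ t → x' s' = a s') := by
          intro x'
          constructor
          · intro hh s' hs'; rw [hh s' hs', hcx s' hs']
          · intro hh s' hs'; rw [hh s' hs', ← hcx s' hs']
        unfold muCondExp
        have hnum : (∑ x' : Fin T → X,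
            if ∀ s' : Fin T, (s' : ℕ) ≤ t → x' s' = x s' then μ x' * ψ x' else 0)
            = ∑ x' : Fin T → X,
              if ∀ s : Fin T, (s : ℕ) ≤ t → x' s = a s then μ x' * g x' else 0 := by
          refine Finset.sum_congr rfl fun x' _ => ?_
          rw [if_congr (hiff x') rfl rfl]
          by_cases hcx' : ∀ s : Fin T, (s : ℕ) ≤ t → x' s = a s
          · rw [if_pos hcx', if_pos hcx', hψ]
            simp only [if_pos hcx']
            ring
          · rw [if_neg hcx', if_neg hcx']
        have hden : (∑ x' : Fin T → X,
            if ∀ s' : Fin T, (s' : ℕ) ≤ t → x' s' = x s' then μ x' else 0)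
            = ∑ x' : Fin T → X,
              if ∀ s : Fin T, (s : ℕ) ≤ t → x' s = a s then μ x' else 0 :=
          Finset.sum_congr rfl fun x' _ => if_congr (hiff x') rfl rfl
        have hnum2 : (∑ x' : Fin T → X,
            if ∀ s : Fin T, (s : ℕ) ≤ t → x' s = a s then μ x' * g x' else 0) = Sg := by
          rw [hSg]
          exact (hmarg g).symm
        have hden2 : (∑ x' : Fin T → X,
            if ∀ s : Fin T, (s : ℕ) ≤ t → x' s = a s then μ x' else 0) = S1 := by
          rw [hS1]
          symm
          have h1 : (∑ p : (Fin T → X) × (Fin T → Y),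
              if ∀ s : Fin T, (s : ℕ) ≤ t → p.1 s = a s then π p else 0)
              = ∑ p : (Fin T → X) × (Fin T → Y),
                if ∀ s : Fin T, (s : ℕ) ≤ t → p.1 s = a s then π p * 1 else 0 :=
            Finset.sum_congr rfl fun p _ => by split <;> ring
          rw [h1, hmarg (fun _ => (1:ℝ))]
          exact Finset.sum_congr rfl fun x' _ => by split <;> ring
        rw [hnum, hden, hnum2, hden2]
      · rw [if_neg hcx]
        unfold muCondExp
        have hnum0 : (∑ x' : Fin T → X,
            if ∀ s' : Fin T, (s' : ℕ) ≤ t → x' s' = x s' then μ x' * ψ x' else 0) = 0 := by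
          refine Finset.sum_eq_zero fun x' _ => ?_
          by_cases hagree : ∀ s' : Fin T, (s' : ℕ) ≤ t → x' s' = x s'
          · have hψ0 : ψ x' = 0 := by
              rw [hψ]
              have : ¬∀ s : Fin T, (s : ℕ) ≤ t → x' s = a s := by
                intro hcon
                exact hcx fun s hs => by rw [← hagree s hs, hcon s hs]
              simp only [if_neg this]
              ring
            rw [if_pos hagree, hψ0, mul_zero]
          · rw [if_neg hagree]
        rw [hnum0, zero_div]
    have step5 : ∑ p : (Fin T → X) × (Fin T → Y), π p * (f p.2 * muCondExp μ ψ t p.1)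
        = Sf * (Sg / S1) := by
      have h1 : ∀ p : (Fin T → X) × (Fin T → Y), π p * (f p.2 * muCondExp μ ψ t p.1)
          = (if ∀ s : Fin T, (s : ℕ) ≤ t → p.1 s = a s then π p * f p.2 else 0) * (Sg / S1) := by
        intro p
        rw [hcM p.1]
        by_cases hcp : ∀ s : Fin T, (s : ℕ) ≤ t → p.1 s = a s
        · rw [if_pos hcp, if_pos hcp]; ring
        · rw [if_neg hcp, if_neg hcp]; ring
      rw [Finset.sum_congr rfl fun p _ => h1 p, ← Finset.sum_mul, ← hSf]
    -- Combine
    have key : (∑ p : (Fin T → X) × (Fin T → Y),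
        if ∀ s : Fin T, (s : ℕ) ≤ t → p.1 s = a s then π p * f p.2 * g p.1 else 0)
        = Sf * (Sg / S1) := by
      rw [← step4, ← step3, step2, step5]
    rw [key]
    by_cases hS10 : S1 = 0
    · have hπ0 : ∀ p : (Fin T → X) × (Fin T → Y), (∀ s : Fin T, (s : ℕ) ≤ t → p.1 s = a s) →
          π p = 0 := by
        intro p hcp
        have := (Finset.sum_eq_zero_iff_of_nonneg fun q _ => by
          by_cases hcq : ∀ s : Fin T, (s : ℕ) ≤ t → q.1 s = a s
          · rw [if_pos hcq]; exact hπ.1 q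
          · rw [if_neg hcq]).mp (hS1 ▸ hS10) p (Finset.mem_univ p)
        rwa [if_pos hcp] at this
      have hSf0 : Sf = 0 := by
        rw [hSf]
        refine Finset.sum_eq_zero fun p _ => ?_
        by_cases hcp : ∀ s : Fin T, (s : ℕ) ≤ t → p.1 s = a s
        · rw [if_pos hcp, hπ0 p hcp, zero_mul]
        · rw [if_neg hcp]
      rw [hS10, hSf0]
      ring
    · rw [mul_assoc, div_mul_cancel₀ _ hS10]

/-- The set `L(μ)` of causality test functions, as a submodule. -/
noncomputable def LmuSub (μ : (Fin T → X) → ℝ) :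
    Submodule ℝ (((Fin T → X) × (Fin T → Y)) → ℝ) where
  carrier := {l | InLmu μ l}
  zero_mem' := ⟨0, Fin.elim0, Fin.elim0, fun j => j.elim0, fun j => j.elim0, by
    funext p; simp⟩
  add_mem' := by
    rintro la lb ⟨Ja, ha, Ma, hda, hma, rfl⟩ ⟨Jb, hb, Mb, hdb, hmb, rfl⟩
    refine ⟨Ja + Jb, Fin.append ha hb, Fin.append Ma Mb, ?_, ?_, ?_⟩
    · intro j t
      refine Fin.addCases (motive := fun j => DepOn t (Fin.append ha hb j t))
        (fun i => ?_) (fun i => ?_) j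
      · simp only [Fin.append_left]; exact hda i t
      · simp only [Fin.append_right]; exact hdb i t
    · intro j
      refine Fin.addCases (motive := fun j => IsMuMartingale μ (Fin.append Ma Mb j))
        (fun i => ?_) (fun i => ?_) j
      · simp only [Fin.append_left]; exact hma i
      · simp only [Fin.append_right]; exact hmb i
    · funext p
      rw [Pi.add_apply, Fin.sum_univ_add]
      congr 1
      · exact Finset.sum_congr rfl fun j _ => by rw [Fin.append_left, Fin.append_left]
      · exact Finset.sum_congr rfl fun j _ => by rw [Fin.append_right, Fin.append_right]
  smul_mem' := by
    rintro c l ⟨J, h, M, hd, hm, rfl⟩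
    refine ⟨J, fun j t y => c * h j t y, M, ?_, hm, ?_⟩
    · intro j t z z' hz
      show c * h j t z = c * h j t z'
      rw [hd j t z z' hz]
    · funext p
      rw [Pi.smul_apply, smul_eq_mul, Finset.mul_sum]
      refine Finset.sum_congr rfl fun j _ => ?_
      rw [Finset.mul_sum]
      exact Finset.sum_congr rfl fun t _ => by ring

lemma mem_LmuSub_iff (μ : (Fin T → X) → ℝ) (l : ((Fin T → X) × (Fin T → Y)) → ℝ) :
    l ∈ LmuSub (Y := Y) μ ↔ InLmu μ l := Iff.rfl

end Helpers

set_option maxHeartbeats 2000000 in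
/-- Minimax reformulation of entropy-regularized causal optimal transport:
`inf_{π causal} {E^π[c] - εH(π)} = sup_{l ∈ L(μ)} inf_{π coupling} {E^π[c+l] - εH(π)}`. -/
theorem regularized_causal_OT_minimax
    {X Y : Type*} {T : ℕ} [Fintype X] [Fintype Y] [DecidableEq X]
    (μ : (Fin T → X) → ℝ) (ν : (Fin T → Y) → ℝ)
    (hμpos : ∀ x, 0 ≤ μ x) (hμsum : ∑ x, μ x = 1)
    (hνpos : ∀ y, 0 ≤ ν y) (hνsum : ∑ y, ν y = 1)
    (c : ((Fin T → X) × (Fin T → Y)) → ℝ) (ε : ℝ) (hε : 0 < ε) :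
    sInf ((fun π => expCost π c - ε * shannonEntropy π) ''
        {π | IsCouplingOf μ ν π ∧ CausalCoupling π})
      = sSup {r : ℝ | ∃ l, InLmu μ l ∧
          r = sInf ((fun π => expCost π (fun p => c p + l p) - ε * shannonEntropy π) ''
            {π | IsCouplingOf μ ν π})} := by
  classical
  set F : (((Fin T → X) × (Fin T → Y)) → ℝ) → ℝ :=
    fun π => expCost π c - ε * shannonEntropy π with hF
  set Cset : Set (((Fin T → X) × (Fin T → Y)) → ℝ) := {π | IsCouplingOf μ ν π} with hCsetdef
  have hFdef : ∀ π : ((Fin T → X) × (Fin T → Y)) → ℝ,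
      F π = (∑ p, π p * c p) + ε * ∑ p, π p * Real.log (π p) := by
    intro π
    show expCost π c - ε * shannonEntropy π = _
    unfold expCost shannonEntropy
    ring
  have hFl : ∀ (l π : ((Fin T → X) × (Fin T → Y)) → ℝ),
      expCost π (fun p => c p + l p) - ε * shannonEntropy π = F π + ∑ p, π p * l p := by
    intro l π
    show _ = expCost π c - ε * shannonEntropy π + _
    unfold expCost shannonEntropy
    have h1 : ∑ p, π p * (c p + l p) = (∑ p, π p * c p) + ∑ p, π p * l p := by
      rw [← Finset.sum_add_distrib]
      exact Finset.sum_congr rfl fun p _ => by ring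
    rw [h1]
    ring
  -- the product coupling
  have hπ0 : IsCouplingOf μ ν (fun p : (Fin T → X) × (Fin T → Y) => μ p.1 * ν p.2) := by
    refine ⟨fun p => mul_nonneg (hμpos p.1) (hνpos p.2), fun a => ?_, fun b => ?_⟩
    · show ∑ b, μ a * ν b = μ a
      rw [← Finset.mul_sum, hνsum, mul_one]
    · show ∑ x, μ x * ν b = ν b
      rw [← Finset.sum_mul, hμsum, one_mul]
  have hπ0causal : CausalCoupling (fun p : (Fin T → X) × (Fin T → Y) => μ p.1 * ν p.2) := by
    intro t ht f hf g a
    have hsplit : ∀ (A : (Fin T → X) → ℝ) (B : (Fin T → Y) → ℝ),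
        (∑ p : (Fin T → X) × (Fin T → Y),
          if ∀ s : Fin T, (s : ℕ) ≤ t → p.1 s = a s then (μ p.1 * ν p.2) * (A p.1 * B p.2) else 0)
        = (∑ x, if ∀ s : Fin T, (s : ℕ) ≤ t → x s = a s then μ x * A x else 0) *
            (∑ y, ν y * B y) := by
      intro A B
      rw [Fintype.sum_prod_type, Finset.sum_mul]
      refine Finset.sum_congr rfl fun x _ => ?_
      have h0 : (∑ y, if ∀ s : Fin T, (s : ℕ) ≤ t → (x, y).1 s = a s
            then μ (x, y).1 * ν (x, y).2 * (A (x, y).1 * B (x, y).2) else 0)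
          = ∑ y, if ∀ s : Fin T, (s : ℕ) ≤ t → x s = a s
            then μ x * ν y * (A x * B y) else 0 := rfl
      rw [h0]
      by_cases hx : ∀ s : Fin T, (s : ℕ) ≤ t → x s = a s
      · simp only [if_pos hx]
        rw [Finset.mul_sum]
        exact Finset.sum_congr rfl fun y _ => by ring
      · simp only [if_neg hx]
        rw [Finset.sum_const_zero, zero_mul]
    have e1 : (∑ p : (Fin T → X) × (Fin T → Y),
        if ∀ s : Fin T, (s : ℕ) ≤ t → p.1 s = a s
          then (μ p.1 * ν p.2) * f p.2 * g p.1 else 0)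
        = (∑ x, if ∀ s : Fin T, (s : ℕ) ≤ t → x s = a s then μ x * g x else 0) *
            (∑ y, ν y * f y) := by
      rw [← hsplit g f]
      exact Finset.sum_congr rfl fun p _ => by split <;> ring
    have e2 : (∑ p : (Fin T → X) × (Fin T → Y),
        if ∀ s : Fin T, (s : ℕ) ≤ t → p.1 s = a s then (μ p.1 * ν p.2) else 0)
        = (∑ x, if ∀ s : Fin T, (s : ℕ) ≤ t → x s = a s then μ x * 1 else 0) *
            (∑ y, ν y * 1) := by
      rw [← hsplit (fun _ => 1) (fun _ => 1)]
      exact Finset.sum_congr rfl fun p _ => by split <;> ring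
    have e3 : (∑ p : (Fin T → X) × (Fin T → Y),
        if ∀ s : Fin T, (s : ℕ) ≤ t → p.1 s = a s then (μ p.1 * ν p.2) * f p.2 else 0)
        = (∑ x, if ∀ s : Fin T, (s : ℕ) ≤ t → x s = a s then μ x * 1 else 0) *
            (∑ y, ν y * f y) := by
      rw [← hsplit (fun _ => 1) f]
      exact Finset.sum_congr rfl fun p _ => by split <;> ring
    have e4 : (∑ p : (Fin T → X) × (Fin T → Y),
        if ∀ s : Fin T, (s : ℕ) ≤ t → p.1 s = a s then (μ p.1 * ν p.2) * g p.1 else 0)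
        = (∑ x, if ∀ s : Fin T, (s : ℕ) ≤ t → x s = a s then μ x * g x else 0) *
            (∑ y, ν y * 1) := by
      rw [← hsplit g (fun _ => 1)]
      exact Finset.sum_congr rfl fun p _ => by split <;> ring
    rw [e1, e2, e3, e4]
    ring
  have hπ0mem : (fun p : (Fin T → X) × (Fin T → Y) => μ p.1 * ν p.2) ∈ Cset := hπ0
  -- compactness of the set of couplings
  have hCclosed : IsClosed Cset := by
    have hrw : Cset = (⋂ p, {π : ((Fin T → X) × (Fin T → Y)) → ℝ | 0 ≤ π p}) ∩
        ((⋂ a, {π : ((Fin T → X) × (Fin T → Y)) → ℝ | ∑ b, π (a, b) = μ a}) ∩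
          (⋂ b, {π : ((Fin T → X) × (Fin T → Y)) → ℝ | ∑ a, π (a, b) = ν b})) := by
      ext π
      simp [hCsetdef, IsCouplingOf, Set.mem_iInter, Prod.forall]
    rw [hrw]
    refine IsClosed.inter (isClosed_iInter fun p =>
      isClosed_le continuous_const (continuous_apply p)) (IsClosed.inter ?_ ?_)
    · exact isClosed_iInter fun a => isClosed_eq
        (continuous_finset_sum _ fun b _ => continuous_apply (a, b)) continuous_const
    · exact isClosed_iInter fun b => isClosed_eq
        (continuous_finset_sum _ fun a _ => continuous_apply (a, b)) continuous_const
  have hCcompact : IsCompact Cset := by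
    refine IsCompact.of_isClosed_subset (isCompact_univ_pi
      (fun _ : (Fin T → X) × (Fin T → Y) => isCompact_Icc (a := (0:ℝ)) (b := 1)))
      hCclosed ?_
    intro π hπ
    rw [Set.mem_univ_pi]
    intro p
    have h1 : π p ≤ μ p.1 := by
      have := Finset.single_le_sum (f := fun b => π (p.1, b))
        (fun b _ => hπ.1 (p.1, b)) (Finset.mem_univ p.2)
      rw [hπ.2.1 p.1] at this
      simpa using this
    have h2 : μ p.1 ≤ 1 := by
      rw [← hμsum]
      exact Finset.single_le_sum (fun x _ => hμpos x) (Finset.mem_univ p.1)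
    exact ⟨hπ.1 p, h1.trans h2⟩
  -- continuity
  have hsumcont : ∀ d : ((Fin T → X) × (Fin T → Y)) → ℝ,
      Continuous fun π : ((Fin T → X) × (Fin T → Y)) → ℝ => ∑ p, π p * d p :=
    fun d => continuous_finset_sum _ fun p _ => (continuous_apply p).mul continuous_const
  have hFcont : Continuous F := by
    have h2 : Continuous fun π : ((Fin T → X) × (Fin T → Y)) → ℝ =>
        ∑ p, π p * Real.log (π p) :=
      continuous_finset_sum _ fun p _ => Real.continuous_mul_log.comp (continuous_apply p)
    have h3 : Continuous fun π : ((Fin T → X) × (Fin T → Y)) → ℝ =>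
        (∑ p, π p * c p) + ε * ∑ p, π p * Real.log (π p) :=
      (hsumcont c).add (continuous_const.mul h2)
    convert h3 using 1
    funext π
    exact hFdef π
  -- convexity of F on nonnegative vectors
  have hFconv : ∀ πa πb : ((Fin T → X) × (Fin T → Y)) → ℝ,
      (∀ p, 0 ≤ πa p) → (∀ p, 0 ≤ πb p) → ∀ θa θb : ℝ, 0 ≤ θa → 0 ≤ θb → θa + θb = 1 →
      F (fun p => θa * πa p + θb * πb p) ≤ θa * F πa + θb * F πb := by
    intro πa πb hπa hπb θa θb hθa hθb hθ
    rw [hFdef, hFdef, hFdef]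
    have h1 : ∑ p, (θa * πa p + θb * πb p) * c p
        = θa * (∑ p, πa p * c p) + θb * ∑ p, πb p * c p := by
      rw [Finset.mul_sum, Finset.mul_sum, ← Finset.sum_add_distrib]
      exact Finset.sum_congr rfl fun p _ => by ring
    have h2 : ∑ p, (θa * πa p + θb * πb p) * Real.log (θa * πa p + θb * πb p)
        ≤ θa * (∑ p, πa p * Real.log (πa p)) + θb * ∑ p, πb p * Real.log (πb p) := by
      rw [Finset.mul_sum, Finset.mul_sum, ← Finset.sum_add_distrib]
      refine Finset.sum_le_sum fun p _ => ?_
      have := Real.convexOn_mul_log.2 (Set.mem_Ici.mpr (hπa p)) (Set.mem_Ici.mpr (hπb p))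
        hθa hθb hθ
      simpa [smul_eq_mul] using this
    rw [h1]
    nlinarith [mul_le_mul_of_nonneg_left h2 (le_of_lt hε)]
  -- convexity of the set of couplings
  have hCconv : ∀ πa ∈ Cset, ∀ πb ∈ Cset, ∀ θa θb : ℝ, 0 ≤ θa → 0 ≤ θb → θa + θb = 1 →
      (fun p => θa * πa p + θb * πb p) ∈ Cset := by
    intro πa hπa πb hπb θa θb hθa hθb hθ
    refine ⟨fun p => add_nonneg (mul_nonneg hθa (hπa.1 p)) (mul_nonneg hθb (hπb.1 p)),
      fun a => ?_, fun b => ?_⟩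
    · rw [Finset.sum_add_distrib, ← Finset.mul_sum, ← Finset.mul_sum,
        hπa.2.1 a, hπb.2.1 a, ← add_mul, hθ, one_mul]
    · rw [Finset.sum_add_distrib, ← Finset.mul_sum, ← Finset.mul_sum,
        hπa.2.2 b, hπb.2.2 b, ← add_mul, hθ, one_mul]
  -- the submodule of test functions, with a finite basis
  set W : Submodule ℝ (((Fin T → X) × (Fin T → Y)) → ℝ) := LmuSub (Y := Y) μ with hWdef
  set k : ℕ := Module.finrank ℝ W with hk
  set bW : Module.Basis (Fin k) ℝ W := Module.finBasis ℝ W with hbW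
  set lvec : Fin k → (((Fin T → X) × (Fin T → Y)) → ℝ) := fun i => ((bW i : W) : _) with hlvec
  have hlvecL : ∀ i, InLmu μ (lvec i) := fun i => (bW i).2
  set A : (((Fin T → X) × (Fin T → Y)) → ℝ) → (Fin k → ℝ) :=
    fun π i => ∑ p, π p * lvec i p with hA
  have hAcont : Continuous A := continuous_pi fun i => hsumcont (lvec i)
  have hAlin : ∀ πa πb : ((Fin T → X) × (Fin T → Y)) → ℝ, ∀ θa θb : ℝ, ∀ i,
      A (fun p => θa * πa p + θb * πb p) i = θa * A πa i + θb * A πb i := by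
    intro πa πb θa θb i
    show ∑ p, (θa * πa p + θb * πb p) * lvec i p
      = θa * (∑ p, πa p * lvec i p) + θb * ∑ p, πb p * lvec i p
    rw [Finset.mul_sum, Finset.mul_sum, ← Finset.sum_add_distrib]
    exact Finset.sum_congr rfl fun p _ => by ring
  have hWpair : ∀ π : (((Fin T → X) × (Fin T → Y)) → ℝ), (∀ i, A π i = 0) →
      ∀ l, InLmu μ l → ∑ p, π p * l p = 0 := by
    intro π hA0 l hl
    have hlW : l ∈ W := hl
    have h0 := congrArg (W.subtype) (bW.sum_repr ⟨l, hlW⟩)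
    rw [map_sum] at h0
    have h1 : ∀ i : Fin k, (W.subtype ((bW.repr ⟨l, hlW⟩ i) • bW i))
        = fun p => (bW.repr ⟨l, hlW⟩ i) * lvec i p := by
      intro i
      funext p
      rw [map_smul]
      rfl
    rw [Finset.sum_congr rfl (fun i _ => h1 i)] at h0
    have h2 : ∀ p, l p = ∑ i, (bW.repr ⟨l, hlW⟩ i) * lvec i p := by
      intro p
      conv_lhs => rw [show l = W.subtype ⟨l, hlW⟩ from rfl, ← h0]
      rw [Finset.sum_apply]
    calc ∑ p, π p * l p
        = ∑ p, π p * ∑ i, (bW.repr ⟨l, hlW⟩ i) * lvec i p :=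
          Finset.sum_congr rfl fun p _ => by rw [h2 p]
      _ = ∑ i, (bW.repr ⟨l, hlW⟩ i) * A π i := by
          simp only [Finset.mul_sum]
          rw [Finset.sum_comm]
          refine Finset.sum_congr rfl fun i _ => ?_
          simp only [hA]
          rw [Finset.mul_sum]
          exact Finset.sum_congr rfl fun p _ => by ring
      _ = 0 := Finset.sum_eq_zero fun i _ => by rw [hA0 i, mul_zero]
  have hchar1 : ∀ π : ((Fin T → X) × (Fin T → Y)) → ℝ, IsCouplingOf μ ν π →
      CausalCoupling π → ∀ i, A π i = 0 := by
    intro π hπ hc i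
    show ∑ p, π p * lvec i p = 0
    exact pairing_zero_of_causal hπ hc (hlvecL i)
  have hchar2 : ∀ π : ((Fin T → X) × (Fin T → Y)) → ℝ, IsCouplingOf μ ν π →
      (∀ i, A π i = 0) → CausalCoupling π :=
    fun π hπ hA0 => causal_of_pairing_zero hμpos hπ (fun l hl => hWpair π hA0 l hl)
  -- the minimizer over causal couplings
  set CausalSet : Set (((Fin T → X) × (Fin T → Y)) → ℝ) :=
    {π | IsCouplingOf μ ν π ∧ CausalCoupling π} with hCausal
  have hCausalCompact : IsCompact CausalSet := by
    have heq : CausalSet = Cset ∩ (⋂ i, {π | A π i = 0}) := by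
      ext π
      simp only [hCausal, Set.mem_setOf_eq, Set.mem_inter_iff, Set.mem_iInter, hCsetdef]
      constructor
      · rintro ⟨h1, h2⟩
        exact ⟨h1, fun i => hchar1 π h1 h2 i⟩
      · rintro ⟨h1, h2⟩
        exact ⟨h1, hchar2 π h1 h2⟩
    rw [heq]
    exact hCcompact.inter_right (isClosed_iInter fun i =>
      isClosed_eq (hsumcont (lvec i)) continuous_const)
  have hCausalNe : CausalSet.Nonempty := ⟨_, ⟨hπ0, hπ0causal⟩⟩
  obtain ⟨πs, hπsmem, hπsmin⟩ := hCausalCompact.exists_isMinOn hCausalNe hFcont.continuousOn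
  have hπsC : πs ∈ Cset := hπsmem.1
  have hπsA0 : ∀ i, A πs i = 0 := fun i => hchar1 πs hπsmem.1 hπsmem.2 i
  have hmin : ∀ π' ∈ CausalSet, F πs ≤ F π' := fun π' h => isMinOn_iff.mp hπsmin π' h
  have hLHSval : sInf (F '' CausalSet) = F πs := by
    refine IsLeast.csInf_eq ⟨⟨πs, hπsmem, rfl⟩, ?_⟩
    rintro r ⟨π', hmem, rfl⟩
    exact hmin π' hmem
  rw [hLHSval]
  -- the RHS set
  have hSlrw : ∀ l : ((Fin T → X) × (Fin T → Y)) → ℝ,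
      ((fun π => expCost π (fun p => c p + l p) - ε * shannonEntropy π) '' Cset)
        = (fun π => F π + ∑ p, π p * l p) '' Cset :=
    fun l => Set.image_congr fun π _ => hFl l π
  have hFlcont : ∀ l : ((Fin T → X) × (Fin T → Y)) → ℝ,
      Continuous fun π : ((Fin T → X) × (Fin T → Y)) → ℝ => F π + ∑ p, π p * l p :=
    fun l => hFcont.add (hsumcont l)
  have hub : ∀ r ∈ {r : ℝ | ∃ l, InLmu μ l ∧
      r = sInf ((fun π => expCost π (fun p => c p + l p) - ε * shannonEntropy π) '' Cset)},
      r ≤ F πs := by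
    rintro r ⟨l, hl, rfl⟩
    rw [hSlrw l]
    have hmem : F πs + ∑ p, πs p * l p ∈ (fun π => F π + ∑ p, π p * l p) '' Cset :=
      ⟨πs, hπsC, rfl⟩
    have hbdd : BddBelow ((fun π => F π + ∑ p, π p * l p) '' Cset) :=
      (hCcompact.image (hFlcont l)).bddBelow
    have := csInf_le hbdd hmem
    rwa [pairing_zero_of_causal hπsmem.1 hπsmem.2 hl, add_zero] at this
  have hRne : Set.Nonempty {r : ℝ | ∃ l, InLmu μ l ∧
      r = sInf ((fun π => expCost π (fun p => c p + l p) - ε * shannonEntropy π) '' Cset)} :=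
    ⟨_, ⟨0, W.zero_mem, rfl⟩⟩
  refine le_antisymm ?_ (csSup_le hRne hub)
  -- hard direction, via Hahn-Banach separation
  refine le_of_forall_pos_le_add fun δ hδ => ?_
  set E : Set ((Fin k → ℝ) × ℝ) := {q | ∃ π ∈ Cset, A π = q.1 ∧ F π ≤ q.2} with hE
  have hEconv : Convex ℝ E := by
    rintro ⟨w1, r1⟩ ⟨π1, hπ1, hA1, hF1⟩ ⟨w2, r2⟩ ⟨π2, hπ2, hA2, hF2⟩ θa θb hθa hθb hθ
    refine ⟨fun p => θa * π1 p + θb * π2 p, hCconv π1 hπ1 π2 hπ2 θa θb hθa hθb hθ, ?_, ?_⟩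
    · funext i
      show A (fun p => θa * π1 p + θb * π2 p) i = _
      rw [hAlin π1 π2 θa θb i, hA1, hA2]
      show θa * w1 i + θb * w2 i = (θa • (w1, r1) + θb • (w2, r2)).1 i
      simp [smul_eq_mul]
    · show F (fun p => θa * π1 p + θb * π2 p) ≤ (θa • (w1, r1) + θb • (w2, r2)).2
      have h1 := hFconv π1 π2 (fun p => hπ1.1 p) (fun p => hπ2.1 p) θa θb hθa hθb hθ
      have h2 : θa * F π1 + θb * F π2 ≤ θa * r1 + θb * r2 :=
        add_le_add (mul_le_mul_of_nonneg_left hF1 hθa) (mul_le_mul_of_nonneg_left hF2 hθb)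
      have h3 : (θa • (w1, r1) + θb • (w2, r2)).2 = θa * r1 + θb * r2 := by
        simp [smul_eq_mul]
      rw [h3]
      linarith
  have hEclosed : IsClosed E := by
    have heq : E = ((fun π => (A π, F π)) '' Cset) + ({(0 : Fin k → ℝ)} ×ˢ Set.Ici (0:ℝ)) := by
      ext q
      constructor
      · rintro ⟨π, hπC, hAq, hFq⟩
        rw [Set.mem_add]
        refine ⟨(A π, F π), ⟨π, hπC, rfl⟩, ((0 : Fin k → ℝ), q.2 - F π),
          Set.mem_prod.mpr ⟨rfl, Set.mem_Ici.mpr (sub_nonneg.mpr hFq)⟩, ?_⟩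
        have h4 : (A π, F π) + ((0 : Fin k → ℝ), q.2 - F π)
            = (A π + 0, F π + (q.2 - F π)) := rfl
        rw [h4, add_zero, add_sub_cancel, hAq]
      · intro hq
        rw [Set.mem_add] at hq
        obtain ⟨u', hu', v', hv', heq'⟩ := hq
        obtain ⟨π, hπC, rfl⟩ := hu'
        obtain ⟨hv1, hv2⟩ := Set.mem_prod.mp hv'
        refine ⟨π, hπC, ?_, ?_⟩
        · rw [← heq']
          show A π = A π + v'.1
          rw [Set.mem_singleton_iff.mp hv1, add_zero]
        · rw [← heq']
          show F π ≤ F π + v'.2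
          have h5 : (0:ℝ) ≤ v'.2 := hv2
          linarith
    rw [heq]
    exact (isClosed_singleton.prod isClosed_Ici).add_left_of_isCompact
      (hCcompact.image (hAcont.prodMk hFcont))
  have hnm : ((0 : Fin k → ℝ), F πs - δ) ∉ E := by
    rintro ⟨π, hπC, hA0, hFle⟩
    have hmem : π ∈ CausalSet := ⟨hπC, hchar2 π hπC (fun i => by rw [congrFun hA0 i]; rfl)⟩
    have h1 := hmin π hmem
    have h2 : F π ≤ F πs - δ := hFle
    linarith
  obtain ⟨φ, u, hφlt, hφgt⟩ := geometric_hahn_banach_point_closed hEconv hEclosed hnm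
  set σ : ℝ := φ ((0 : Fin k → ℝ), (1:ℝ)) with hσ
  have hφ0r : ∀ r : ℝ, φ ((0 : Fin k → ℝ), r) = σ * r := by
    intro r
    have h1 : ((0 : Fin k → ℝ), r) = r • ((0 : Fin k → ℝ), (1:ℝ)) := by
      simp
    rw [h1, map_smul, smul_eq_mul, hσ, mul_comm]
  have hmemE : ((0 : Fin k → ℝ), F πs) ∈ E := ⟨πs, hπsC, by
    funext i
    exact hπsA0 i, le_rfl⟩
  have hσpos : 0 < σ := by
    have h1 := hφlt
    have h2 := hφgt _ hmemE
    rw [hφ0r] at h1 h2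
    nlinarith
  set γ : Fin k → ℝ := fun i => φ ((fun j => if i = j then (1:ℝ) else 0), (0:ℝ)) with hγ
  have hφdec : ∀ w : Fin k → ℝ, ∀ r : ℝ, φ (w, r) = (∑ i, w i * γ i) + σ * r := by
    intro w r
    have h1 : (w, r) = (∑ i, w i • ((fun j => if i = j then (1:ℝ) else 0), (0:ℝ)))
        + ((0 : Fin k → ℝ), r) := by
      have hfst : (∑ i, w i • ((fun j => if i = j then (1:ℝ) else 0 : Fin k → ℝ), (0:ℝ))).1
          = ∑ i, w i • (fun j => if i = j then (1:ℝ) else 0 : Fin k → ℝ) := by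
        rw [Prod.fst_sum]
        exact Finset.sum_congr rfl fun i _ => rfl
      have hsnd : (∑ i, w i • ((fun j => if i = j then (1:ℝ) else 0 : Fin k → ℝ), (0:ℝ))).2
          = 0 := by
        rw [Prod.snd_sum]
        simp
      refine Prod.ext ?_ ?_
      · show w = _
        rw [Prod.fst_add, hfst]
        show w = (∑ i, w i • (fun j => if i = j then (1:ℝ) else 0 : Fin k → ℝ)) + 0
        rw [add_zero]
        exact pi_eq_sum_univ w
      · show r = _
        rw [Prod.snd_add, hsnd, zero_add]
    rw [h1, map_add, map_sum, hφ0r]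
    congr 1
    refine Finset.sum_congr rfl fun i _ => ?_
    rw [map_smul, smul_eq_mul, hγ]
  -- the dual test function
  set lW : W := σ⁻¹ • ∑ i, γ i • bW i with hlWdef
  set l : ((Fin T → X) × (Fin T → Y)) → ℝ := (lW : ((Fin T → X) × (Fin T → Y)) → ℝ) with hldef
  have hlmem : InLmu μ l := lW.2
  have hlap : ∀ p, l p = σ⁻¹ * ∑ i, γ i * lvec i p := by
    intro p
    have h0 : l = W.subtype lW := rfl
    rw [h0, hlWdef, map_smul, map_sum]
    rw [Pi.smul_apply, smul_eq_mul]
    congr 1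
    rw [Finset.sum_apply]
    refine Finset.sum_congr rfl fun i _ => ?_
    rw [map_smul]
    rfl
  have hpairl : ∀ π : ((Fin T → X) × (Fin T → Y)) → ℝ,
      ∑ p, π p * l p = σ⁻¹ * ∑ i, A π i * γ i := by
    intro π
    rw [Finset.mul_sum]
    have h1 : ∀ p, π p * l p = ∑ i, σ⁻¹ * (γ i * (π p * lvec i p)) := by
      intro p
      rw [hlap p, Finset.mul_sum, Finset.mul_sum]
      exact Finset.sum_congr rfl fun i _ => by ring
    rw [Finset.sum_congr rfl fun p _ => h1 p, Finset.sum_comm]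
    refine Finset.sum_congr rfl fun i _ => ?_
    show _ = σ⁻¹ * ((∑ p, π p * lvec i p) * γ i)
    rw [Finset.sum_mul, Finset.mul_sum]
    exact Finset.sum_congr rfl fun p _ => by ring
  clear hbW
  clear_value l lW γ σ A lvec bW k F CausalSet
  have hlower : ∀ π ∈ Cset, F πs - δ ≤ F π + ∑ p, π p * l p := by
    intro π hπC
    have hmemE' : (A π, F π) ∈ E := ⟨π, hπC, rfl, le_rfl⟩
    have h1 : u < φ (A π, F π) := hφgt _ hmemE'
    have h2 : φ ((0 : Fin k → ℝ), F πs - δ) < u := hφlt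
    rw [hφ0r] at h2
    rw [hφdec] at h1
    have h3 : σ * (F πs - δ) < (∑ i, A π i * γ i) + σ * F π := by linarith
    have h4 : σ⁻¹ * (σ * (F πs - δ)) < σ⁻¹ * ((∑ i, A π i * γ i) + σ * F π) :=
      mul_lt_mul_of_pos_left h3 (inv_pos.mpr hσpos)
    rw [← mul_assoc, inv_mul_cancel₀ (ne_of_gt hσpos), one_mul, mul_add, ← mul_assoc,
      inv_mul_cancel₀ (ne_of_gt hσpos), one_mul] at h4
    rw [hpairl π]
    linarith
  -- conclusion
  have hrmem : sInf ((fun π => expCost π (fun p => c p + l p) - ε * shannonEntropy π) '' Cset)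
      ∈ {r : ℝ | ∃ l, InLmu μ l ∧
        r = sInf ((fun π => expCost π (fun p => c p + l p) - ε * shannonEntropy π) '' Cset)} :=
    ⟨l, hlmem, rfl⟩
  have hrge : F πs - δ ≤ sInf ((fun π =>
      expCost π (fun p => c p + l p) - ε * shannonEntropy π) '' Cset) := by
    rw [hSlrw l]
    refine le_csInf ⟨_, ⟨_, hπ0mem, rfl⟩⟩ ?_
    rintro r ⟨π, hπC, rfl⟩
    exact hlower π hπC
  have hfinal := le_trans hrge (le_csSup ⟨F πs, hub⟩ hrmem)
  linarith
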